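/- Assume d⃗ = (d_1, …, d_k) is odd-symmetric (in particular d is odd) and S is an admissible φ-invariant sequence. Then for all α, λ ∈ F, every A ∈ h(α,λ,S) satisfies A_{i, d+1−i} = 0 for i = 1, …, (d−1)/2. In particular, if in addition d_1 = 1, then p_{1,k}(A) = 0 for every A ∈ h(α,λ,S). -/

import Mathlib

open scoped Classical

noncomputable section

namespace Paper

attribute [local instance] LieRing.ofAssociativeRing

variable {F : Type*}

/-- Offset (starting global index) of the `i`-th block. -/
def off {k : ℕ} (dv : Fin k → ℕ) (i : Fin k) : ℕ := ∑ t ∈ Finset.Iio i, dv t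

/-- Total size `d = d₁ + ⋯ + d_k`. -/
def dtot {k : ℕ} (dv : Fin k → ℕ) : ℕ := ∑ t, dv t

theorem off_add_lt {k : ℕ} (dv : Fin k → ℕ) (i : Fin k) (r : Fin (dv i)) :
    off dv i + (r : ℕ) < dtot dv := by
  have h1 : off dv i + dv i ≤ dtot dv := by
    have h : off dv i + dv i = ∑ t ∈ insert i (Finset.Iio i), dv t := by
      rw [Finset.sum_insert (by simp), add_comm]
      rfl
    rw [h]
    exact Finset.sum_le_sum_of_subset (Finset.subset_univ _)
  have := r.isLt
  omega

/-- The global index of the `r`-th row/column of the `i`-th block. -/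
def emb {k : ℕ} (dv : Fin k → ℕ) (i : Fin k) (r : Fin (dv i)) : Fin (dtot dv) :=
  ⟨off dv i + r, off_add_lt dv i r⟩

/-- The projection `p_{i,j}` onto the `(i,j)`-block. -/
def blk {k : ℕ} (dv : Fin k → ℕ) (i j : Fin k)
    (A : Matrix (Fin (dtot dv)) (Fin (dtot dv)) F) :
    Matrix (Fin (dv i)) (Fin (dv j)) F :=
  Matrix.of fun r s => A (emb dv i r) (emb dv j s)

/-- The `p × p` upper triangular Jordan block `J^p(α)`. -/
def Jord [Field F] (p : ℕ) (α : F) : Matrix (Fin p) (Fin p) F :=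
  Matrix.of fun a b =>
    if (b : ℕ) = (a : ℕ) then α else if (b : ℕ) = (a : ℕ) + 1 then 1 else 0

/-- The matrix whose `(i,j)` block is `M` and all other blocks vanish. -/
def embMat [Field F] {k : ℕ} (dv : Fin k → ℕ) (i j : Fin k)
    (M : Matrix (Fin (dv i)) (Fin (dv j)) F) :
    Matrix (Fin (dtot dv)) (Fin (dtot dv)) F :=
  Matrix.of fun x y => ∑ r, ∑ s, if x = emb dv i r ∧ y = emb dv j s then M r s else 0

/-- The block diagonal matrix `D(α,λ) = J^{d₁}(α) ⊕ J^{d₂}(α-λ) ⊕ ⋯ ⊕ J^{d_k}(α-(k-1)λ)`. -/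
def Dmat [Field F] {k : ℕ} (dv : Fin k → ℕ) (α lam : F) :
    Matrix (Fin (dtot dv)) (Fin (dtot dv)) F :=
  ∑ i : Fin k, embMat dv i i (Jord (dv i) (α - ((i : ℕ) : F) * lam))

/-- `A` is the matrix `E(S)` of an admissible sequence `S`:  all blocks vanish except the
blocks `p_{i,i+1}`, and each block `p_{i,i+1}` has nonzero lower-left (i.e. `(dᵢ,1)`) entry. -/
def IsEShaped [Field F] {k : ℕ} (dv : Fin k → ℕ)
    (A : Matrix (Fin (dtot dv)) (Fin (dtot dv)) F) : Prop :=
  (∀ i j : Fin k, (j : ℕ) ≠ (i : ℕ) + 1 → blk dv i j A = 0) ∧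
  (∀ i j : Fin k, (j : ℕ) = (i : ℕ) + 1 →
    ∀ (hr : dv i - 1 < dv i) (hs : 0 < dv j),
      A (emb dv i ⟨dv i - 1, hr⟩) (emb dv j ⟨0, hs⟩) ≠ 0)

/-- The matrix `E(C)` of the canonical sequence `C`. -/
def CanE (F : Type*) [Field F] {k : ℕ} (dv : Fin k → ℕ) :
    Matrix (Fin (dtot dv)) (Fin (dtot dv)) F :=
  Matrix.of fun x y =>
    if ∃ i j : Fin k, (j : ℕ) = (i : ℕ) + 1 ∧
        (x : ℕ) = off dv i + (dv i - 1) ∧ (y : ℕ) = off dv j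
    then 1 else 0

/-- The Lie subalgebra `h(α,λ,S)` of `gl(d,F)` generated by `D(α,λ)` and `E(S) = A`. -/
def hAlg (F : Type*) [Field F] {k : ℕ} (dv : Fin k → ℕ) (α lam : F)
    (A : Matrix (Fin (dtot dv)) (Fin (dtot dv)) F) :
    LieSubalgebra F (Matrix (Fin (dtot dv)) (Fin (dtot dv)) F) :=
  LieSubalgebra.lieSpan F _ {Dmat dv α lam, A}

/-- The Lie subalgebra `n(S)` generated by the matrices `(ad D(0,0))^l (E(S))`, `l ≥ 0`. -/
def nAlg (F : Type*) [Field F] {k : ℕ} (dv : Fin k → ℕ)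
    (A : Matrix (Fin (dtot dv)) (Fin (dtot dv)) F) :
    LieSubalgebra F (Matrix (Fin (dtot dv)) (Fin (dtot dv)) F) :=
  LieSubalgebra.lieSpan F _ {X | ∃ l : ℕ, X = (fun Y => ⁅Dmat dv (0 : F) 0, Y⁆)^[l] A}

/-- `r_{i,j}`:  `0` if the `(i,j)`-blocks of all members of `h(0,0,C)` vanish, and otherwise
the minimal rank of a nonzero `(i,j)`-block of a member of `h(0,0,C)`. -/
def rr (F : Type*) [Field F] {k : ℕ} (dv : Fin k → ℕ) (i j : Fin k) : ℕ :=
  if ∀ X ∈ hAlg F dv 0 0 (CanE F dv), blk dv i j X = 0 then 0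
  else sInf {n | ∃ X ∈ hAlg F dv 0 0 (CanE F dv),
    blk dv i j X ≠ 0 ∧ (blk dv i j X).rank = n}

/-- The automorphism `φ(A)_{i,j} = (−1)^{i−j+1} A_{d+1−j,d+1−i}` (here written 0-indexed). -/
def Phi (F : Type*) [Field F] (d : ℕ) (A : Matrix (Fin d) (Fin d) F) :
    Matrix (Fin d) (Fin d) F :=
  Matrix.of fun x y =>
    (-1 : F) ^ ((x : ℕ) + (y : ℕ) + 1) *
      A ⟨d - 1 - (y : ℕ), by have := y.isLt; omega⟩ ⟨d - 1 - (x : ℕ), by have := x.isLt; omega⟩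

/-- `d⃗` is symmetric: `dᵢ = d_{k+1−i}` for all `i` (0-indexed: `dᵢ = d_{k-1-i}`). -/
def SymmSeq {k : ℕ} (dv : Fin k → ℕ) : Prop :=
  ∀ i j : Fin k, (i : ℕ) + (j : ℕ) = k - 1 → dv i = dv j

/-- `d⃗` is odd-symmetric: symmetric, `k` odd and the middle `d_{(k+1)/2}` odd. -/
def OddSymmSeq {k : ℕ} (dv : Fin k → ℕ) : Prop :=
  SymmSeq dv ∧ Odd k ∧ ∀ i : Fin k, 2 * (i : ℕ) = k - 1 → Odd (dv i)

/-- Conditions (1) and (2) of Definition `Normalized` (weak normalization), expressed on the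
matrix `A = E(S)`, so that `S(i)_{a,b} = A (emb i a) (emb (i+1) b)` (0-indexed). -/
def IsWeaklyNormalized [Field F] {k : ℕ} (dv : Fin k → ℕ)
    (A : Matrix (Fin (dtot dv)) (Fin (dtot dv)) F) : Prop :=
  (∀ i j : Fin k, (j : ℕ) = (i : ℕ) + 1 →
      ∀ (hr : dv i - 1 < dv i) (hs : 0 < dv j),
        A (emb dv i ⟨dv i - 1, hr⟩) (emb dv j ⟨0, hs⟩) = 1) ∧
  (∀ i j l : Fin k, (j : ℕ) = (i : ℕ) + 1 → (l : ℕ) = (j : ℕ) + 1 →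
      ∀ (hr : dv i - 1 < dv i) (s : Fin (dv j)) (hs : dv j - 1 - (s : ℕ) < dv j)
        (h0 : 0 < dv l),
        A (emb dv i ⟨dv i - 1, hr⟩) (emb dv j s) =
          A (emb dv j ⟨dv j - 1 - (s : ℕ), hs⟩) (emb dv l ⟨0, h0⟩))

/-- The sequence `S` (given through its matrix `A = E(S)`) is normalized. -/
def IsNormalized [Field F] {k : ℕ} (dv : Fin k → ℕ)
    (A : Matrix (Fin (dtot dv)) (Fin (dtot dv)) F) : Prop :=
  IsWeaklyNormalized dv A ∧
  (∀ i j : Fin k, (i : ℕ) = 0 → (j : ℕ) = 1 →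
      ∀ (r : Fin (dv i)) (hs : 0 < dv j), (r : ℕ) ≠ dv i - 1 →
        A (emb dv i r) (emb dv j ⟨0, hs⟩) = 0) ∧
  (∀ i j : Fin k, (j : ℕ) = (i : ℕ) + 1 → (j : ℕ) = k - 1 →
      ∀ (hr : dv i - 1 < dv i) (s : Fin (dv j)), (s : ℕ) ≠ 0 →
        A (emb dv i ⟨dv i - 1, hr⟩) (emb dv j s) = 0)

/-- Membership in the group `G(d⃗)`: a block diagonal matrix each of whose diagonal blocks is
a polynomial with nonzero constant term evaluated at `J^{dᵢ}(0)`. -/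
def InG (F : Type*) [Field F] {k : ℕ} (dv : Fin k → ℕ)
    (P : Matrix (Fin (dtot dv)) (Fin (dtot dv)) F) : Prop :=
  IsUnit P ∧ ∃ q : Fin k → Polynomial F, (∀ i, (q i).coeff 0 ≠ 0) ∧
    P = ∑ i : Fin k, embMat dv i i (Polynomial.aeval (Jord (dv i) (0 : F)) (q i))

/-- The nilpotency degree of a Lie algebra: the least `m` with `L^m = 0` in the lower central
series `L^0 = L`, `L^{i+1} = [L, L^i]`. -/
def nilDeg (F : Type*) (L : Type*) [Field F] [LieRing L] [LieAlgebra F L] : ℕ :=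
  sInf {m | LieModule.lowerCentralSeries F L L m = ⊥}



section Aux5

variable {F : Type*} [Field F] {k : ℕ}

lemma off_add_le_off (dv : Fin k → ℕ) {i j : Fin k} (hij : i < j) :
    off dv i + dv i ≤ off dv j := by
  have h : off dv i + dv i = ∑ t ∈ insert i (Finset.Iio i), dv t := by
    rw [Finset.sum_insert (by simp), add_comm]; rfl
  rw [h, off]
  apply Finset.sum_le_sum_of_subset
  intro t ht
  simp only [Finset.mem_insert, Finset.mem_Iio, Fin.lt_def, Fin.ext_iff] at *
  omega

lemma emb_inj (dv : Fin k → ℕ) {i j : Fin k} {r : Fin (dv i)} {s : Fin (dv j)}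
    (h : emb dv i r = emb dv j s) : i = j ∧ (r : ℕ) = (s : ℕ) := by
  have hv : off dv i + (r : ℕ) = off dv j + (s : ℕ) := congrArg Fin.val h
  rcases lt_trichotomy i j with hij | hij | hij
  · have := off_add_le_off dv hij; have := r.isLt; omega
  · subst hij; exact ⟨rfl, by omega⟩
  · have := off_add_le_off dv hij; have := s.isLt; omega

lemma sum_split (dv : Fin k → ℕ) (i : Fin k) :
    dtot dv = off dv i + dv i + ∑ t ∈ Finset.Ioi i, dv t := by
  have hu : (Finset.univ : Finset (Fin k)) = (insert i (Finset.Iio i)) ∪ Finset.Ioi i := by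
    ext t
    simp only [Finset.mem_univ, Finset.mem_union, Finset.mem_insert, Finset.mem_Iio,
      Finset.mem_Ioi, Fin.lt_def, Fin.ext_iff, true_iff]
    omega
  have hd : Disjoint (insert i (Finset.Iio i)) (Finset.Ioi i) := by
    rw [Finset.disjoint_left]
    intro a ha hb
    simp only [Finset.mem_insert, Finset.mem_Iio, Finset.mem_Ioi, Fin.lt_def,
      Fin.ext_iff] at ha hb
    omega
  rw [dtot, hu, Finset.sum_union hd, Finset.sum_insert (by simp)]
  rw [off]; ring

lemma exists_emb (dv : Fin k → ℕ) (hk : 0 < k) (x : Fin (dtot dv)) :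
    ∃ i r, x = emb dv i r := by
  classical
  set T := Finset.univ.filter (fun i : Fin k => off dv i ≤ (x : ℕ)) with hT
  have h0 : off dv (⟨0, hk⟩ : Fin k) = 0 := by
    rw [off]
    apply Finset.sum_eq_zero
    intro t ht
    simp only [Finset.mem_Iio, Fin.lt_def] at ht
    omega
  have hne : T.Nonempty := ⟨⟨0, hk⟩, by simp [hT, h0]⟩
  set i := T.max' hne with hi
  have hmem : off dv i ≤ (x : ℕ) := by
    exact (Finset.mem_filter.mp (T.max'_mem hne)).2
  have hlt : (x : ℕ) < off dv i + dv i := by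
    by_contra hcon
    push_neg at hcon
    by_cases hik : (i : ℕ) + 1 < k
    · set j : Fin k := ⟨(i : ℕ) + 1, hik⟩ with hj
      have hoff : off dv j = off dv i + dv i := by
        have hIio : Finset.Iio j = insert i (Finset.Iio i) := by
          ext t
          simp only [Finset.mem_Iio, Finset.mem_insert, Fin.lt_def, Fin.ext_iff, hj]
          omega
        rw [off, hIio, Finset.sum_insert (by simp), add_comm]; rfl
      have hjT : j ∈ T := by
        rw [hT, Finset.mem_filter]
        exact ⟨Finset.mem_univ _, by omega⟩
      have hle := T.le_max' j hjT
      rw [← hi, Fin.le_def] at hle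
      have h' : (i : ℕ) + 1 ≤ (i : ℕ) := hle
      omega
    · have hsum := sum_split dv i
      have hIoi : Finset.Ioi i = ∅ := by
        ext t
        simp only [Finset.mem_Ioi, Fin.lt_def, Finset.notMem_empty, iff_false, not_lt]
        have := t.isLt; omega
      rw [hIoi, Finset.sum_empty] at hsum
      have := x.isLt
      omega
  refine ⟨i, ⟨(x : ℕ) - off dv i, by omega⟩, ?_⟩
  apply Fin.ext
  show (x : ℕ) = off dv i + ((x : ℕ) - off dv i)
  omega

lemma sym_off (dv : Fin k → ℕ) (hs : SymmSeq dv) (i : Fin k) :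
    off dv (Fin.rev i) = ∑ t ∈ Finset.Ioi i, dv t := by
  have hmap : Finset.Iio (Fin.rev i) = (Finset.Ioi i).map ⟨Fin.rev, Fin.rev_injective⟩ := by
    ext t
    simp only [Finset.mem_Iio, Finset.mem_map, Finset.mem_Ioi, Function.Embedding.coeFn_mk]
    constructor
    · intro ht
      refine ⟨Fin.rev t, ?_, Fin.rev_rev t⟩
      rw [Fin.lt_def] at ht ⊢
      rw [Fin.val_rev] at ht ⊢
      have := t.isLt; have := i.isLt
      omega
    · rintro ⟨u, hu, rfl⟩
      rw [Fin.lt_def] at hu ⊢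
      rw [Fin.val_rev, Fin.val_rev]
      have := u.isLt; have := i.isLt
      omega
  rw [off, hmap, Finset.sum_map]
  apply Finset.sum_congr rfl
  intro t _
  simp only [Function.Embedding.coeFn_mk]
  exact hs t.rev t (by rw [Fin.val_rev]; have := t.isLt; omega)

lemma rev_val (dv : Fin k → ℕ) (hs : SymmSeq dv) (i : Fin k) (r : Fin (dv i)) :
    dtot dv - 1 - (off dv i + (r : ℕ)) = off dv (Fin.rev i) + (dv i - 1 - (r : ℕ)) := by
  have h1 := sum_split dv i
  have h2 := sym_off dv hs i
  have := r.isLt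
  omega

lemma dtot_odd (dv : Fin k → ℕ) (hk : 0 < k) (hsym : OddSymmSeq dv) : Odd (dtot dv) := by
  obtain ⟨hs, hko, hmid⟩ := hsym
  obtain ⟨m, hm⟩ := hko
  have hmk : m < k := by omega
  set c : Fin k := ⟨m, hmk⟩ with hc
  have hc2 : 2 * (c : ℕ) = k - 1 := by simp [hc]; omega
  have hrev : Fin.rev c = c := by
    apply Fin.ext
    rw [Fin.val_rev]
    simp [hc]; omega
  have h1 := sum_split dv c
  have h2 := sym_off dv hs c
  rw [hrev] at h2
  obtain ⟨p, hp⟩ := hmid c hc2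
  exact ⟨off dv c + p, by omega⟩

variable (F)

lemma Phi_apply (d : ℕ) (X : Matrix (Fin d) (Fin d) F) (x y a b : Fin d)
    (ha : (a : ℕ) = d - 1 - (y : ℕ)) (hb : (b : ℕ) = d - 1 - (x : ℕ)) :
    Phi F d X x y = (-1 : F) ^ ((x : ℕ) + (y : ℕ) + 1) * X a b := by
  have h1 : a = ⟨d - 1 - (y : ℕ), by have := y.isLt; omega⟩ := Fin.ext ha
  have h2 : b = ⟨d - 1 - (x : ℕ), by have := x.isLt; omega⟩ := Fin.ext hb
  rw [h1, h2]; rfl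

lemma Phi_add (d : ℕ) (X Y : Matrix (Fin d) (Fin d) F) :
    Phi F d (X + Y) = Phi F d X + Phi F d Y := by
  ext x y; simp [Phi, mul_add]

lemma Phi_smul (d : ℕ) (c : F) (X : Matrix (Fin d) (Fin d) F) :
    Phi F d (c • X) = c • Phi F d X := by
  ext x y; simp [Phi, Matrix.smul_apply, smul_eq_mul]; ring

lemma Phi_zero (d : ℕ) : Phi F d (0 : Matrix (Fin d) (Fin d) F) = 0 := by
  ext x y; simp [Phi]

lemma Phi_sub (d : ℕ) (X Y : Matrix (Fin d) (Fin d) F) :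
    Phi F d (X - Y) = Phi F d X - Phi F d Y := by
  ext x y; simp [Phi, mul_sub]

lemma Phi_mul (d : ℕ) (X Y : Matrix (Fin d) (Fin d) F) :
    Phi F d (X * Y) = - (Phi F d Y * Phi F d X) := by
  ext x y
  have hx := x.isLt; have hy := y.isLt
  simp only [Phi, Matrix.of_apply, Matrix.mul_apply, Matrix.neg_apply, Finset.mul_sum]
  rw [← Finset.sum_neg_distrib]
  refine Fintype.sum_bijective Fin.rev Fin.rev_bijective _ _ (fun z => ?_)
  have hz := z.isLt
  have h1 : (⟨d - 1 - ((Fin.rev z : ℕ)), by rw [Fin.val_rev]; omega⟩ : Fin d) = z := by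
    apply Fin.ext
    show d - 1 - (Fin.rev z : ℕ) = (z : ℕ)
    rw [Fin.val_rev]; omega
  have hsgn : ((-1 : F)) ^ ((x : ℕ) + (y : ℕ) + 1)
      = -(((-1 : F)) ^ ((x : ℕ) + (Fin.rev z : ℕ) + 1) *
          ((-1 : F)) ^ ((Fin.rev z : ℕ) + (y : ℕ) + 1)) := by
    have h2 : ((-1 : F)) ^ ((x : ℕ) + (Fin.rev z : ℕ) + 1) *
        ((-1 : F)) ^ ((Fin.rev z : ℕ) + (y : ℕ) + 1)
        = ((-1 : F)) ^ (((x : ℕ) + (y : ℕ) + 1) + (2 * (Fin.rev z : ℕ) + 1)) := by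
      rw [← pow_add]
      congr 1
      ring
    rw [h2, pow_add (-1 : F) ((x : ℕ) + (y : ℕ) + 1) (2 * (Fin.rev z : ℕ) + 1),
      Odd.neg_one_pow (n := 2 * (Fin.rev z : ℕ) + 1) (Nat.odd_iff.mpr (by omega))]
    ring
  calc ((-1 : F)) ^ ((x : ℕ) + (y : ℕ) + 1) *
        (X ⟨d - 1 - (y : ℕ), by omega⟩ z * Y z ⟨d - 1 - (x : ℕ), by omega⟩)
      = -(((-1 : F)) ^ ((x : ℕ) + (Fin.rev z : ℕ) + 1) *
          Y ⟨d - 1 - (Fin.rev z : ℕ), by rw [Fin.val_rev]; omega⟩ ⟨d - 1 - (x : ℕ), by omega⟩ *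
          (((-1 : F)) ^ ((Fin.rev z : ℕ) + (y : ℕ) + 1) *
          X ⟨d - 1 - (y : ℕ), by omega⟩ ⟨d - 1 - (Fin.rev z : ℕ), by rw [Fin.val_rev]; omega⟩)) := by
        rw [h1, hsgn]; ring
    _ = _ := rfl

lemma Phi_bracket (d : ℕ) (X Y : Matrix (Fin d) (Fin d) F) :
    Phi F d ⁅X, Y⁆ = ⁅Phi F d X, Phi F d Y⁆ := by
  rw [Ring.lie_def, Ring.lie_def, Phi_sub, Phi_mul, Phi_mul]
  exact neg_sub_neg _ _

variable {F}

lemma emb_eq_iff (dv : Fin k → ℕ) {i : Fin k} {r s : Fin (dv i)} :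
    emb dv i r = emb dv i s ↔ (r : ℕ) = (s : ℕ) := by
  constructor
  · intro h; exact (emb_inj dv h).2
  · intro h
    apply Fin.ext
    show off dv i + (r : ℕ) = off dv i + (s : ℕ)
    omega

lemma embMat_apply_emb (dv : Fin k → ℕ) {i j : Fin k}
    (M : Matrix (Fin (dv i)) (Fin (dv j)) F) (r : Fin (dv i)) (s : Fin (dv j)) :
    embMat dv i j M (emb dv i r) (emb dv j s) = M r s := by
  show (∑ r', ∑ s', if emb dv i r = emb dv i r' ∧ emb dv j s = emb dv j s' then M r' s' else 0)
      = M r s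
  rw [Finset.sum_eq_single r]
  · rw [Finset.sum_eq_single s]
    · simp
    · intro b _ hb
      rw [if_neg]
      rintro ⟨-, h2⟩
      exact hb (Fin.ext ((emb_inj dv h2).2)).symm
    · intro h; exact absurd (Finset.mem_univ s) h
  · intro b _ hb
    apply Finset.sum_eq_zero
    intro c _
    rw [if_neg]
    rintro ⟨h1, -⟩
    exact hb (Fin.ext ((emb_inj dv h1).2)).symm
  · intro h; exact absurd (Finset.mem_univ r) h

lemma embMat_apply_zero (dv : Fin k → ℕ) {i j m n : Fin k}
    (M : Matrix (Fin (dv i)) (Fin (dv j)) F) (r : Fin (dv m)) (s : Fin (dv n))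
    (h : i ≠ m ∨ j ≠ n) :
    embMat dv i j M (emb dv m r) (emb dv n s) = 0 := by
  show (∑ r', ∑ s', if emb dv m r = emb dv i r' ∧ emb dv n s = emb dv j s' then M r' s' else 0)
      = 0
  apply Finset.sum_eq_zero
  intro r' _
  apply Finset.sum_eq_zero
  intro s' _
  rw [if_neg]
  rintro ⟨h1, h2⟩
  rcases h with h | h
  · exact h (emb_inj dv h1).1.symm
  · exact h (emb_inj dv h2).1.symm

lemma Dmat_apply_same (dv : Fin k → ℕ) (α lam : F) (i : Fin k) (r s : Fin (dv i)) :
    Dmat dv α lam (emb dv i r) (emb dv i s)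
      = Jord (dv i) (α - ((i : ℕ) : F) * lam) r s := by
  rw [Dmat, Matrix.sum_apply]
  rw [Finset.sum_eq_single i]
  · exact embMat_apply_emb dv _ r s
  · intro m _ hmi
    exact embMat_apply_zero dv _ r s (Or.inl hmi)
  · intro h; exact absurd (Finset.mem_univ i) h

lemma Dmat_apply_ne (dv : Fin k → ℕ) (α lam : F) {i j : Fin k} (hij : i ≠ j)
    (r : Fin (dv i)) (s : Fin (dv j)) :
    Dmat dv α lam (emb dv i r) (emb dv j s) = 0 := by
  rw [Dmat, Matrix.sum_apply]
  apply Finset.sum_eq_zero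
  intro m _
  by_cases him : m = i
  · exact embMat_apply_zero dv _ r s (Or.inr (fun h => hij (him.symm.trans h)))
  · exact embMat_apply_zero dv _ r s (Or.inl him)

lemma Phi_Dmat (dv : Fin k → ℕ) (hk : 0 < k) (hs : SymmSeq dv) (α lam : F) :
    Phi F (dtot dv) (Dmat dv α lam)
      = Dmat dv α lam + (((k - 1 : ℕ) : F) * lam - 2 * α) •
          (1 : Matrix (Fin (dtot dv)) (Fin (dtot dv)) F) := by
  ext x y
  obtain ⟨i, r, rfl⟩ := exists_emb dv hk x
  obtain ⟨j, s, rfl⟩ := exists_emb dv hk y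
  have hdvi : dv (Fin.rev i) = dv i :=
    hs (Fin.rev i) i (by rw [Fin.val_rev]; have := i.isLt; omega)
  have hdvj : dv (Fin.rev j) = dv j :=
    hs (Fin.rev j) j (by rw [Fin.val_rev]; have := j.isLt; omega)
  have hrlt : dv i - 1 - (r : ℕ) < dv (Fin.rev i) := by rw [hdvi]; have := r.isLt; omega
  have hslt : dv j - 1 - (s : ℕ) < dv (Fin.rev j) := by rw [hdvj]; have := s.isLt; omega
  set r' : Fin (dv (Fin.rev i)) := ⟨dv i - 1 - (r : ℕ), hrlt⟩ with hr'
  set s' : Fin (dv (Fin.rev j)) := ⟨dv j - 1 - (s : ℕ), hslt⟩ with hs'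
  rw [Phi_apply F (dtot dv) (Dmat dv α lam) _ _ (emb dv (Fin.rev j) s') (emb dv (Fin.rev i) r')
    (by show off dv (Fin.rev j) + (dv j - 1 - (s : ℕ)) = dtot dv - 1 - (off dv j + (s : ℕ));
        exact (rev_val dv hs j s).symm)
    (by show off dv (Fin.rev i) + (dv i - 1 - (r : ℕ)) = dtot dv - 1 - (off dv i + (r : ℕ));
        exact (rev_val dv hs i r).symm)]
  by_cases hij : i = j
  · subst hij
    rw [Matrix.add_apply, Matrix.smul_apply, smul_eq_mul, Dmat_apply_same, Dmat_apply_same]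
    have hrevval : ((Fin.rev i : ℕ) : F) = ((k - 1 : ℕ) : F) - ((i : ℕ) : F) := by
      rw [Fin.val_rev]
      have := i.isLt
      rw [show k - ((i : ℕ) + 1) = (k - 1) - (i : ℕ) by omega,
        Nat.cast_sub (by omega)]
    have hrval : (r' : ℕ) = dv i - 1 - (r : ℕ) := rfl
    have hsval : (s' : ℕ) = dv i - 1 - (s : ℕ) := rfl
    have hexp : (emb dv i r : ℕ) + (emb dv i s : ℕ) + 1
        = off dv i + (r : ℕ) + (off dv i + (s : ℕ)) + 1 := rfl
    simp only [Jord, Matrix.of_apply, hrval, hsval, hexp]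
    have hrb := r.isLt; have hsb := s.isLt
    by_cases h1 : (s : ℕ) = (r : ℕ)
    · rw [if_pos (by omega), if_pos h1,
        show emb dv i s = emb dv i r from (emb_eq_iff dv).mpr h1,
        Matrix.one_apply_eq, Odd.neg_one_pow (Nat.odd_iff.mpr (by omega)), hrevval]
      ring
    · by_cases h2 : (s : ℕ) = (r : ℕ) + 1
      · rw [if_neg (by omega), if_pos (by omega), if_neg h1, if_pos h2,
          Even.neg_one_pow (Nat.even_iff.mpr (by omega)),
          Matrix.one_apply_ne (fun h => h1 (emb_inj dv h).2.symm)]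
        ring
      · rw [if_neg (by omega), if_neg (by omega), if_neg h1, if_neg h2,
          Matrix.one_apply_ne (fun h => h1 (emb_inj dv h).2.symm)]
        ring
  · have hrevne : Fin.rev j ≠ Fin.rev i := fun h => hij (Fin.rev_injective h).symm
    rw [Matrix.add_apply, Matrix.smul_apply, Dmat_apply_ne dv α lam hrevne,
      Dmat_apply_ne dv α lam hij, Matrix.one_apply_ne (fun h => hij (emb_inj dv h).1), mul_zero]
    simp

end Aux5

/-- Proposition `ida`:  if `d⃗` is odd-symmetric and `S` is an admissible
`φ`-invariant sequence, then every `A ∈ h(α,λ,S)` vanishes on the upper half of the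
antidiagonal, i.e. `A_{i,d+1−i} = 0` for `i = 1, …, (d−1)/2` (0-indexed: `X x y = 0` whenever
`x + y = d − 1` and `2x + 1 < d`).  In particular, if `d₁ = 1` then `p_{1,k}(X) = 0` for all
`X ∈ h(α,λ,S)`. -/
theorem statement5 {F : Type*} [Field F] [CharZero F] {k : ℕ} (hk : 2 ≤ k)
    (dv : Fin k → ℕ) (hdv : ∀ i, 0 < dv i) (hsym : OddSymmSeq dv)
    (A : Matrix (Fin (dtot dv)) (Fin (dtot dv)) F) (hA : IsEShaped dv A)
    (hphi : Phi F (dtot dv) A = A) (α lam : F) :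
    (∀ X ∈ hAlg F dv α lam A, ∀ x y : Fin (dtot dv),
      (x : ℕ) + (y : ℕ) + 1 = dtot dv → 2 * (x : ℕ) + 1 < dtot dv → X x y = 0) ∧
    (∀ i1 : Fin k, (i1 : ℕ) = 0 → dv i1 = 1 → ∀ ik : Fin k, (ik : ℕ) = k - 1 →
      ∀ X ∈ hAlg F dv α lam A, blk dv i1 ik X = 0) := by
  have hk0 : 0 < k := by omega
  have hd_odd : Odd (dtot dv) := dtot_odd dv hk0 hsym
  have hd2 : 2 ≤ dtot dv := by
    calc 2 ≤ k := hk
    _ = ∑ _t : Fin k, 1 := by simp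
    _ ≤ dtot dv := Finset.sum_le_sum (fun t _ => hdv t)
  set D := Dmat dv α lam with hD
  set t : F := ((k - 1 : ℕ) : F) * lam - 2 * α with ht
  have hPhiD : Phi F (dtot dv) D = D + t • (1 : Matrix (Fin (dtot dv)) (Fin (dtot dv)) F) :=
    Phi_Dmat dv hk0 hsym.1 α lam
  -- If `Phi (X - c•D) = X - c•D` then `Phi X = X + (c*t)•1`.
  have hfix : ∀ (X : Matrix (Fin (dtot dv)) (Fin (dtot dv)) F) (c : F),
      Phi F (dtot dv) (X - c • D) = X - c • D →
      Phi F (dtot dv) X = X + c • (t • (1 : Matrix (Fin (dtot dv)) (Fin (dtot dv)) F)) := by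
    intro X c h
    calc Phi F (dtot dv) X = Phi F (dtot dv) ((X - c • D) + c • D) := by
          rw [sub_add_cancel]
      _ = (X - c • D) + c • (D + t • 1) := by
          rw [Phi_add, Phi_smul, h, hPhiD]
      _ = X + c • (t • (1 : Matrix (Fin (dtot dv)) (Fin (dtot dv)) F)) := by
          rw [smul_add]; abel
  -- The set of such `X` is a Lie subalgebra.
  let L : LieSubalgebra F (Matrix (Fin (dtot dv)) (Fin (dtot dv)) F) :=
    { carrier := {X | ∃ c : F, Phi F (dtot dv) (X - c • D) = X - c • D}
      add_mem' := by
        rintro X Y ⟨c1, h1⟩ ⟨c2, h2⟩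
        refine ⟨c1 + c2, ?_⟩
        have hXY : X + Y - (c1 + c2) • D = (X - c1 • D) + (Y - c2 • D) := by
          rw [add_smul]; abel
        rw [hXY, Phi_add, h1, h2]
      zero_mem' := by
        refine ⟨0, ?_⟩
        rw [zero_smul, sub_zero, Phi_zero]
      smul_mem' := by
        rintro a X ⟨c, h⟩
        refine ⟨a * c, ?_⟩
        have hX : a • X - (a * c) • D = a • (X - c • D) := by
          rw [smul_sub, mul_smul]
        rw [hX, Phi_smul, h]
      lie_mem' := by
        rintro X Y ⟨c1, h1⟩ ⟨c2, h2⟩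
        refine ⟨0, ?_⟩
        rw [zero_smul, sub_zero, Phi_bracket, hfix X c1 h1, hfix Y c2 h2]
        have hone1 : ∀ (Z : Matrix (Fin (dtot dv)) (Fin (dtot dv)) F) (a : F),
            ⁅Z, a • (t • (1 : Matrix (Fin (dtot dv)) (Fin (dtot dv)) F))⁆ = 0 := by
          intro Z a
          rw [Ring.lie_def, Matrix.mul_smul, Matrix.mul_smul, Matrix.smul_mul,
            Matrix.smul_mul, Matrix.mul_one, Matrix.one_mul, sub_self]
        have hone2 : ∀ (Z : Matrix (Fin (dtot dv)) (Fin (dtot dv)) F) (a : F),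
            ⁅a • (t • (1 : Matrix (Fin (dtot dv)) (Fin (dtot dv)) F)), Z⁆ = 0 := by
          intro Z a
          rw [Ring.lie_def, Matrix.mul_smul, Matrix.mul_smul, Matrix.smul_mul,
            Matrix.smul_mul, Matrix.mul_one, Matrix.one_mul, sub_self]
        rw [add_lie, lie_add, lie_add, hone1, hone1, hone2, add_zero, add_zero, add_zero] }
  have hsub : hAlg F dv α lam A ≤ L := by
    apply LieSubalgebra.lieSpan_le.mpr
    rintro X hX
    rcases hX with rfl | hX2
    · exact ⟨1, by rw [one_smul, sub_self, Phi_zero]⟩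
    · rw [Set.mem_singleton_iff] at hX2
      subst hX2
      exact ⟨0, by rw [zero_smul, sub_zero]; exact hphi⟩
  have key : ∀ X ∈ hAlg F dv α lam A, ∃ c : F,
      Phi F (dtot dv) (X - c • D) = X - c • D := fun X hX => hsub hX
  have main : ∀ X ∈ hAlg F dv α lam A, ∀ x y : Fin (dtot dv),
      (x : ℕ) + (y : ℕ) + 1 = dtot dv → 2 * (x : ℕ) + 1 < dtot dv → X x y = 0 := by
    intro X hX x y hxy hx
    obtain ⟨c, hc⟩ := key X hX
    set N := X - c • D with hN
    have hxlt := x.isLt; have hylt := y.isLt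
    have hNxy : N x y = 0 := by
      have h1 : Phi F (dtot dv) N x y = (-1 : F) ^ ((x : ℕ) + (y : ℕ) + 1) * N x y :=
        Phi_apply F (dtot dv) N x y x y (by omega) (by omega)
      rw [hc] at h1
      rw [Odd.neg_one_pow (by rw [hxy]; exact hd_odd)] at h1
      have h3 : (2 : F) * N x y = 0 := by linear_combination h1
      have h4 : (2 : F) ≠ 0 := two_ne_zero
      exact (mul_eq_zero.mp h3).resolve_left h4
    have hDxy : D x y = 0 := by
      obtain ⟨i, r, rfl⟩ := exists_emb dv hk0 x
      obtain ⟨j, s, rfl⟩ := exists_emb dv hk0 y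
      have hxv : (emb dv i r : ℕ) = off dv i + (r : ℕ) := rfl
      have hyv : (emb dv j s : ℕ) = off dv j + (s : ℕ) := rfl
      by_cases hij : i = j
      · subst hij
        rw [hD, Dmat_apply_same]
        obtain ⟨m, hm⟩ := hd_odd
        simp only [Jord, Matrix.of_apply]
        rw [if_neg (by omega), if_neg (by omega)]
      · exact Dmat_apply_ne dv α lam hij r s
    have hXval : X x y = N x y + c * D x y := by
      rw [hN, Matrix.sub_apply, Matrix.smul_apply, smul_eq_mul]; ring
    rw [hXval, hNxy, hDxy]; ring
  refine ⟨main, ?_⟩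
  intro i1 hi1 hdi1 ik hik X hX
  have hdik : dv ik = 1 := by
    have h := hsym.1 i1 ik (by omega)
    omega
  ext r s
  have hoff1 : off dv i1 = 0 := by
    rw [off]
    apply Finset.sum_eq_zero
    intro u hu
    simp only [Finset.mem_Iio, Fin.lt_def] at hu
    omega
  have hoffk : off dv ik + dv ik = dtot dv := by
    have hsplit := sum_split dv ik
    have hIoi : Finset.Ioi ik = ∅ := by
      ext u
      simp only [Finset.mem_Ioi, Fin.lt_def, Finset.notMem_empty, iff_false, not_lt]
      have := u.isLt; omega
    rw [hIoi, Finset.sum_empty] at hsplit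
    omega
  have hrv : (r : ℕ) = 0 := by have := r.isLt; omega
  have hsv : (s : ℕ) = 0 := by have := s.isLt; omega
  have hxv : (emb dv i1 r : ℕ) = 0 := by
    show off dv i1 + (r : ℕ) = 0
    omega
  have hyv : (emb dv ik s : ℕ) = dtot dv - 1 := by
    show off dv ik + (s : ℕ) = dtot dv - 1
    omega
  have hz := main X hX (emb dv i1 r) (emb dv ik s) (by omega) (by omega)
  show X (emb dv i1 r) (emb dv ik s) = (0 : Matrix (Fin (dv i1)) (Fin (dv ik)) F) r s
  rw [hz, Matrix.zero_apply]

end Paper
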